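/- Let α = a_1...a_n and β = b_1...b_n be consecutive k-ary necklaces of length n in lexicographic order (α before β), and let j be the smallest positive integer such that a_{n−j} ≠ k−1. If j ≤ n, then the prefixes of α and β of length n−j−1 are equal. -/

import Mathlib

/-- A k-ary necklace: lexicographically least among all its cyclic rotations. -/
def IsNecklace {k : ℕ} (w : List (Fin k)) : Prop := ∀ r : ℕ, w ≤ w.rotate r

private lemma neck_lt_iff {k : ℕ} {x y : List (Fin k)} : x < y ↔ List.Lex (· < ·) x y :=
  Iff.rfl

private lemma neck_cons_lt_cons₁ {k : ℕ} {a b : Fin k} {l l2 : List (Fin k)} (h : a < b) :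
    (a :: l) < (b :: l2) := neck_lt_iff.mpr (List.Lex.rel h)

private lemma neck_cons_lt_cons₂ {k : ℕ} {a : Fin k} {l l2 : List (Fin k)} (h : l < l2) :
    (a :: l) < (a :: l2) := neck_lt_iff.mpr (List.Lex.cons (neck_lt_iff.mp h))

private lemma neck_cons_lt_cons_iff {k : ℕ} {a b : Fin k} {l l2 : List (Fin k)}
    (h : (a :: l) < (b :: l2)) : a < b ∨ (a = b ∧ l < l2) := by
  cases neck_lt_iff.mp h with
  | cons h' => exact Or.inr ⟨rfl, neck_lt_iff.mpr h'⟩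
  | rel h' => exact Or.inl h'

private lemma neck_not_lt_nil {k : ℕ} {l : List (Fin k)} : ¬ l < ([] : List (Fin k)) := by
  intro h
  exact List.not_lex_nil (neck_lt_iff.mp h)

private lemma neck_ptwise_le {k : ℕ} : ∀ (x y : List (Fin k)), x.length = y.length →
    (∀ (i : ℕ) (hx : i < x.length) (hy : i < y.length), x[i] ≤ y[i]) → x ≤ y
  | [], [], _, _ => le_refl _
  | [], _ :: _, h, _ => by simp at h
  | _ :: _, [], h, _ => by simp at h
  | a :: x, b :: y, h, hp => by
      have hab : a ≤ b := hp 0 (by simp) (by simp)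
      rcases lt_or_eq_of_le hab with hlt | heq
      · exact le_of_lt (neck_cons_lt_cons₁ hlt)
      · subst heq
        exact List.cons_le_cons a (neck_ptwise_le x y (by simpa using h)
          (fun i h1 h2 => hp (i + 1) (by simpa using h1) (by simpa using h2)))

private lemma neck_lt_of_take_ne {k : ℕ} : ∀ (m : ℕ) (a b c : List (Fin k)), a < b →
    c.take m = a.take m → a.take m ≠ b.take m → c < b := by
  intro m
  induction m with
  | zero => intro a b c _ _ hne; simp at hne
  | succ m ih =>
    intro a b c hab hca hne
    match a, b, c with
    | [], b, c =>
      match b with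
      | [] => exact absurd hab neck_not_lt_nil
      | y :: b' =>
        have : c = [] := by simpa using hca
        subst this; exact List.nil_lt_cons _ _
    | x :: a', [], c => exact absurd hab neck_not_lt_nil
    | x :: a', y :: b', c =>
      match c with
      | [] => simp at hca
      | z :: c' =>
        simp only [List.take_succ_cons, List.cons.injEq] at hca
        obtain ⟨rfl, hca'⟩ := hca
        rcases neck_cons_lt_cons_iff hab with hlt | ⟨rfl, hab'⟩
        · exact neck_cons_lt_cons₁ hlt
        · have hne' : a'.take m ≠ b'.take m := by
            intro h; exact hne (by simp [h])
          exact neck_cons_lt_cons₂ (ih a' b' c' hab' hca' hne')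

theorem stmt_1 (n k : ℕ) (hk : 2 ≤ k) (α β : List (Fin k))
    (hαlen : α.length = n) (hβlen : β.length = n)
    (hα : IsNecklace α) (hβ : IsNecklace β)
    (hlt : α < β)
    (hadj : ∀ γ : List (Fin k), γ.length = n → IsNecklace γ → ¬ (α < γ ∧ γ < β))
    (j : ℕ) (hj1 : 1 ≤ j) (hjn : j ≤ n)
    -- j is the smallest positive integer with a_{n-j} ≠ k-1 (1-based indexing)
    (hjne : α[n - j - 1]? ≠ some ⟨k - 1, by omega⟩)
    (hjmin : ∀ i, 1 ≤ i → i < j → α[n - i - 1]? = some ⟨k - 1, by omega⟩) :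
    α.take (n - j - 1) = β.take (n - j - 1) := by
  by_contra hne
  have hn1 : 1 ≤ n := le_trans hj1 hjn
  set m := n - j - 1 with hm
  have hmn : m < n := by omega
  have hck : k - 1 < k := by omega
  set c : Fin k := ⟨k - 1, hck⟩ with hc
  have htklen : (α.take m).length = m := by simp [hαlen]; omega
  have hwlen : (α.take m ++ List.replicate (n - m) c).length = n := by
    simp [hαlen]; omega
  -- pointwise α ≤ w
  have hpt : ∀ (t : ℕ) (h1 : t < α.length)
      (h2 : t < (α.take m ++ List.replicate (n - m) c).length),
      α[t] ≤ (α.take m ++ List.replicate (n - m) c)[t] := by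
    intro t h1 h2
    by_cases htm : t < m
    · rw [List.getElem_append_left (show t < (α.take m).length by omega)]
      rw [List.getElem_take]
    · rw [List.getElem_append_right (show (α.take m).length ≤ t by omega),
        List.getElem_replicate]
      exact Fin.mk_le_mk.mpr (by have := (α[t]'h1).isLt; omega)
  -- rotations compare pointwise
  have hrotle : ∀ r : ℕ, α.rotate r ≤ (α.take m ++ List.replicate (n - m) c).rotate r := by
    intro r
    apply neck_ptwise_le _ _ (by simp [hαlen, hwlen])
    intro i hx hy
    rw [List.getElem_rotate, List.getElem_rotate]
    have e1 : (i + r) % α.length = (i + r) % n := by rw [hαlen]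
    have e2 : (i + r) % (α.take m ++ List.replicate (n - m) c).length = (i + r) % n := by
      rw [hwlen]
    simp only [e1, e2]
    exact hpt _ (by rw [hαlen]; exact Nat.mod_lt _ (by omega))
      (by rw [hwlen]; exact Nat.mod_lt _ (by omega))
  have hαw : ∀ r : ℕ, α ≤ (α.take m ++ List.replicate (n - m) c).rotate r :=
    fun r => le_trans (hα r) (hrotle r)
  -- minimal rotation of w
  obtain ⟨r₀, hr₀mem, hr₀min⟩ := Finset.exists_min_image (Finset.range n)
    (fun r => (α.take m ++ List.replicate (n - m) c).rotate r)
    ⟨0, Finset.mem_range.mpr (by omega)⟩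
  have hγlen : ((α.take m ++ List.replicate (n - m) c).rotate r₀).length = n := by
    simp [hwlen]
  have hγneck : IsNecklace ((α.take m ++ List.replicate (n - m) c).rotate r₀) := by
    intro r
    rw [List.rotate_rotate]
    have hthis := List.rotate_mod (α.take m ++ List.replicate (n - m) c) (r₀ + r)
    rw [hwlen] at hthis
    rw [← hthis]
    exact hr₀min _ (Finset.mem_range.mpr (Nat.mod_lt _ (by omega)))
  -- α < γ
  have hαγ : α < (α.take m ++ List.replicate (n - m) c).rotate r₀ := by
    rcases lt_or_eq_of_le (hαw r₀) with h | h
    · exact h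
    · exfalso
      have h2 : α.rotate r₀ = α :=
        le_antisymm (le_trans (hrotle r₀) (le_of_eq h.symm)) (hα r₀)
      have h3 : (α.take m ++ List.replicate (n - m) c).rotate r₀ = α.rotate r₀ := by
        rw [h2, ← h]
      -- rotate back to conclude w = α
      have h4 : (α.take m ++ List.replicate (n - m) c) = α := by
        have e1 := congrArg (fun l => l.rotate (r₀ / n * n + n - r₀)) h3
        simp only [List.rotate_rotate] at e1
        have hdm := Nat.div_add_mod r₀ n
        have hmod : r₀ % n < n := Nat.mod_lt _ (by omega)
        have hmul : r₀ / n * n = n * (r₀ / n) := Nat.mul_comm _ _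
        have hexp : n * (r₀ / n + 1) = n * (r₀ / n) + n := by ring
        have hr₀n : r₀ + (r₀ / n * n + n - r₀) = n * (r₀ / n + 1) := by omega
        rw [hr₀n] at e1
        have e2 : ∀ (l : List (Fin k)), l.length = n → l.rotate (n * (r₀ / n + 1)) = l := by
          intro l hl
          have hthis : l.rotate (n * (r₀ / n + 1) % l.length) = l.rotate (n * (r₀ / n + 1)) :=
            List.rotate_mod _ _
          rw [← hthis, hl, Nat.mul_mod_right, List.rotate_zero]
        rw [e2 _ hwlen, e2 α hαlen] at e1
        exact e1
      apply hjne
      have h5 := congrArg (fun l => l[m]?) h4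
      rw [← h5, List.getElem?_eq_getElem (show m < _ by omega)]
      rw [List.getElem_append_right (show (α.take m).length ≤ m by omega),
        List.getElem_replicate]
  -- γ < β
  have hwβ : (α.take m ++ List.replicate (n - m) c) < β := by
    apply neck_lt_of_take_ne m α β _ hlt _ hne
    exact List.take_left' htklen
  have hγβ : (α.take m ++ List.replicate (n - m) c).rotate r₀ < β :=
    lt_of_le_of_lt (by
      have h0 := hr₀min 0 (Finset.mem_range.mpr (by omega))
      simpa using h0) hwβ
  exact hadj _ hγlen hγneck ⟨hαγ, hγβ⟩
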